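/- Let α > 0, a > 0, let κ₀ be the unique solution in (α/2, ∞) of (α/2)·exp(−2κa) = κ − α/2, set ξ₀ := −κ₀², and let φ₀ : ℝ → ℝ be given by φ₀(x) := cosh(κ₀ x) for |x| ≤ a and φ₀(x) := cosh(κ₀ a)·exp(−κ₀(|x| − a)) for |x| > a. Let V₊, V₋ : ℝ → ℝ be bounded measurable functions with V₊ + V₋ integrable, and let φ : ℝ → ℝ be a Lipschitz function with compact support. Then for ψ(x₁, x₂) := φ(x₁)φ₀(x₂) one has the identity ∫_{ℝ²} |∇ψ|² + ∫_ℝ (V₊(x₁) − α)|ψ(x₁, a)|² dx₁ + ∫_ℝ (V₋(x₁) − α)|ψ(x₁, −a)|² dx₁ − ξ₀ ∫_{ℝ²} |ψ|² = (∫_ℝ φ₀²) · ∫_ℝ |φ'|² + φ₀(a)² ∫_ℝ (V₊ + V₋)(x₁) |φ(x₁)|² dx₁, where all derivatives are the almost-everywhere derivatives of the Lipschitz functions involved. -/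

import Mathlib

open MeasureTheory Set Filter

section Helpers

theorem my_intOn_exp_Ioi (b C p : ℝ) (hb : 0 < b) :
    IntegrableOn (fun x => C * Real.exp (-b*(x - p))) (Ioi p) := by
  have h := (exp_neg_integrableOn_Ioi p hb).const_mul (C * Real.exp (b*p))
  have e : (fun x => C * Real.exp (-b*(x - p))) = fun x => (C * Real.exp (b*p)) * Real.exp (-b*x) :=
    funext fun x => by rw [mul_assoc, ← Real.exp_add]; ring_nf
  rw [e]; exact h

theorem my_integral_exp_Ioi (b C p : ℝ) (hb : 0 < b) :
    ∫ x in Ioi p, C * Real.exp (-b*(x-p)) = C / b := by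
  have hd : ∀ x ∈ Ici p, HasDerivAt (fun x => -(C/b) * Real.exp (-b*(x-p)))
      (C * Real.exp (-b*(x-p))) x := by
    intro x _
    have h1 : HasDerivAt (fun x : ℝ => -b*(x-p)) (-b) x := by
      simpa using ((hasDerivAt_id x).sub_const p).const_mul (-b)
    have := (h1.exp.const_mul (-(C/b)))
    exact this.congr_deriv (by field_simp)
  have htend : Tendsto (fun x => -(C/b) * Real.exp (-b*(x-p))) atTop (nhds 0) := by
    have h1 : Tendsto (fun x : ℝ => -b*(x-p)) atTop atBot := by
      apply Tendsto.const_mul_atTop_of_neg (neg_neg_iff_pos.2 hb)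
      exact tendsto_atTop_add_const_right _ (-p) tendsto_id
    have := (Real.tendsto_exp_atBot.comp h1).const_mul (-(C/b))
    simpa [Function.comp] using this
  rw [integral_Ioi_of_hasDerivAt_of_tendsto' hd (my_intOn_exp_Ioi b C p hb) htend]
  simp

theorem my_intOn_comp_neg {f : ℝ → ℝ} {s : Set ℝ} (hs : MeasurableSet s) (hf : IntegrableOn f s) :
    IntegrableOn (fun x => f (-x)) ((fun x : ℝ => -x) ⁻¹' s) := by
  have A : MeasurableEmbedding (fun x : ℝ => -x) :=
    (Homeomorph.neg ℝ).isClosedEmbedding.measurableEmbedding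
  have : IntegrableOn (f ∘ fun x : ℝ => -x) ((fun x : ℝ => -x) ⁻¹' s) := by
    rw [IntegrableOn, ← A.integrable_map_iff, ← Measure.restrict_map A.measurable hs,
      Measure.map_neg_eq_self (volume : Measure ℝ)]
    exact hf
  exact this

theorem my_intOn_exp_Iic (b C p : ℝ) (hb : 0 < b) :
    IntegrableOn (fun x => C * Real.exp (b*(x - p))) (Iic p) := by
  have h0 : IntegrableOn (fun x => C * Real.exp (-b*(x - (-p)))) (Ici (-p)) :=
    (integrableOn_Ici_iff_integrableOn_Ioi (f := fun x => C * Real.exp (-b*(x - (-p))))).2 (my_intOn_exp_Ioi b C (-p) hb)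
  have h1 := my_intOn_comp_neg measurableSet_Ici h0
  have hset : ((fun x : ℝ => -x) ⁻¹' Ici (-p)) = Iic p := by ext x; simp
  rw [hset] at h1
  refine h1.congr_fun (fun x _ => ?_) measurableSet_Iic
  beta_reduce
  congr 1
  rw [Real.exp_eq_exp]; ring

theorem my_integral_exp_Iic (b C p : ℝ) (hb : 0 < b) :
    ∫ x in Iic p, C * Real.exp (b*(x-p)) = C / b := by
  have h2 := integral_comp_neg_Iic p (fun y => C * Real.exp (-b*(y-(-p))))
  rw [← my_integral_exp_Ioi b C (-p) hb, ← h2]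
  apply setIntegral_congr_fun measurableSet_Iic
  intro x _
  simp only; congr 1; ring

theorem my_split3 {f : ℝ → ℝ} {a : ℝ} (ha : 0 < a)
    (h1 : IntegrableOn f (Iic (-a))) (h2 : IntegrableOn f (Ioc (-a) a))
    (h3 : IntegrableOn f (Ioi a)) :
    Integrable f ∧
      ∫ x, f x = (∫ x in Iic (-a), f x) + (∫ x in Ioc (-a) a, f x) + (∫ x in Ioi a, f x) := by
  have hle : (-a : ℝ) ≤ a := by linarith
  have h23 : IntegrableOn f (Ioi (-a)) := by
    rw [← Ioc_union_Ioi_eq_Ioi hle]; exact h2.union h3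
  have hdisj : Disjoint (Ioc (-a) a) (Ioi a) := by
    rw [Set.disjoint_left]; rintro x hx1 hx2; exact absurd hx1.2 (not_le.2 hx2)
  constructor
  · have := h1.union h23
    rwa [Iic_union_Ioi, integrableOn_univ] at this
  · have e1 := intervalIntegral.integral_Iic_add_Ioi h1 h23
    have e2 : ∫ x in Ioi (-a), f x = (∫ x in Ioc (-a) a, f x) + ∫ x in Ioi a, f x := by
      rw [← Ioc_union_Ioi_eq_Ioi hle]
      exact setIntegral_union hdisj measurableSet_Ioi h2 h3
    rw [← e1, e2]; ring

/-- the a.e. derivative of `φ₀` -/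
noncomputable def gfun (κ a : ℝ) : ℝ → ℝ := fun x =>
  if x < -a then κ * (Real.cosh (κ*a) * Real.exp (κ*(x+a)))
  else if x ≤ a then κ * Real.sinh (κ * x)
  else -(κ * (Real.cosh (κ*a) * Real.exp (-κ*(x-a))))

variable {κ a : ℝ} {φ₀ : ℝ → ℝ}

theorem phi0_mid (hφ₀ : ∀ x : ℝ, φ₀ x =
      if |x| ≤ a then Real.cosh (κ * x)
      else Real.cosh (κ * a) * Real.exp (-κ * (|x| - a)))
    {x : ℝ} (hx : |x| ≤ a) : φ₀ x = Real.cosh (κ * x) := by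
  rw [hφ₀ x, if_pos hx]

theorem phi0_right (ha : 0 < a) (hφ₀ : ∀ x : ℝ, φ₀ x =
      if |x| ≤ a then Real.cosh (κ * x)
      else Real.cosh (κ * a) * Real.exp (-κ * (|x| - a)))
    {x : ℝ} (hx : a ≤ x) : φ₀ x = Real.cosh (κ * a) * Real.exp (-κ * (x - a)) := by
  rcases eq_or_lt_of_le hx with h | h
  · rw [hφ₀ x, ← h, if_pos (by rw [abs_of_pos ha])]
    simp
  · have hxpos : 0 < x := lt_trans ha h
    rw [hφ₀ x, if_neg (by rw [abs_of_pos hxpos]; exact not_le.2 h), abs_of_pos hxpos]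

theorem phi0_left (ha : 0 < a) (hφ₀ : ∀ x : ℝ, φ₀ x =
      if |x| ≤ a then Real.cosh (κ * x)
      else Real.cosh (κ * a) * Real.exp (-κ * (|x| - a)))
    {x : ℝ} (hx : x ≤ -a) : φ₀ x = Real.cosh (κ * a) * Real.exp (κ * (x + a)) := by
  rcases eq_or_lt_of_le hx with h | h
  · subst h
    rw [hφ₀ (-a), if_pos (by rw [abs_neg, abs_of_pos ha]), mul_neg, Real.cosh_neg]
    simp
  · have hxneg : x < 0 := lt_trans h (by linarith)
    rw [hφ₀ x, if_neg (by rw [abs_of_neg hxneg]; push_neg; linarith), abs_of_neg hxneg]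
    congr 1; ring

theorem phi0_deriv (ha : 0 < a) (hφ₀ : ∀ x : ℝ, φ₀ x =
      if |x| ≤ a then Real.cosh (κ * x)
      else Real.cosh (κ * a) * Real.exp (-κ * (|x| - a)))
    {x : ℝ} (hx1 : x ≠ a) (hx2 : x ≠ -a) : HasDerivAt φ₀ (gfun κ a x) x := by
  rcases lt_trichotomy x (-a) with h | h | h
  · -- x < -a
    have hg : gfun κ a x = κ * (Real.cosh (κ*a) * Real.exp (κ*(x+a))) := by
      simp only [gfun, if_pos h]
    have hin : HasDerivAt (fun y : ℝ => κ*(y+a)) κ x := by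
      simpa using ((hasDerivAt_id x).add_const a).const_mul κ
    have hE := hin.exp.const_mul (Real.cosh (κ*a))
    have heq : φ₀ =ᶠ[nhds x] fun y => Real.cosh (κ*a) * Real.exp (κ*(y+a)) :=
      eventuallyEq_of_mem (Iio_mem_nhds h) (fun y hy => phi0_left ha hφ₀ (le_of_lt hy))
    have := hE.congr_of_eventuallyEq heq
    rw [hg]; exact this.congr_deriv (by ring)
  · exact absurd h hx2
  · rcases lt_trichotomy x a with h' | h' | h'
    · -- -a < x < a
      have hg : gfun κ a x = κ * Real.sinh (κ * x) := by
        simp only [gfun, if_neg (not_lt.2 (le_of_lt h)), if_pos (le_of_lt h')]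
      have hin : HasDerivAt (fun y : ℝ => κ*y) κ x := by
        simpa using (hasDerivAt_id x).const_mul κ
      have hC := hin.cosh
      have heq : φ₀ =ᶠ[nhds x] fun y => Real.cosh (κ*y) := by
        refine eventuallyEq_of_mem (Ioo_mem_nhds h h') (fun y hy => ?_)
        exact phi0_mid hφ₀ (abs_le.2 ⟨le_of_lt hy.1, le_of_lt hy.2⟩)
      have := hC.congr_of_eventuallyEq heq
      rw [hg]; exact this.congr_deriv (by ring)
    · exact absurd h' hx1
    · -- a < x
      have hg : gfun κ a x = -(κ * (Real.cosh (κ*a) * Real.exp (-κ*(x-a)))) := by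
        simp only [gfun, if_neg (not_lt.2 (show -a ≤ x by linarith)), if_neg (not_le.2 h')]
      have hin : HasDerivAt (fun y : ℝ => -κ*(y-a)) (-κ) x := by
        simpa using ((hasDerivAt_id x).sub_const a).const_mul (-κ)
      have hE := hin.exp.const_mul (Real.cosh (κ*a))
      have heq : φ₀ =ᶠ[nhds x] fun y => Real.cosh (κ*a) * Real.exp (-κ*(y-a)) :=
        eventuallyEq_of_mem (Ioi_mem_nhds h') (fun y hy => phi0_right ha hφ₀ (le_of_lt hy))
      have := hE.congr_of_eventuallyEq heq
      rw [hg]; exact this.congr_deriv (by ring)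

end Helpers

theorem separated_test_function_identity
    (α a κ₀ ξ₀ : ℝ) (hα : 0 < α) (ha : 0 < a)
    (hκ₀ : κ₀ ∈ Set.Ioi (α / 2) ∧
      (α / 2) * Real.exp (-2 * κ₀ * a) = κ₀ - α / 2)
    (hξ₀ : ξ₀ = -κ₀ ^ 2)
    (φ₀ : ℝ → ℝ)
    (hφ₀ : ∀ x : ℝ, φ₀ x =
      if |x| ≤ a then Real.cosh (κ₀ * x)
      else Real.cosh (κ₀ * a) * Real.exp (-κ₀ * (|x| - a)))
    (Vp Vm : ℝ → ℝ) (hVpm : Measurable Vp) (hVmm : Measurable Vm)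
    (hVpb : ∃ C : ℝ, ∀ x : ℝ, |Vp x| ≤ C) (hVmb : ∃ C : ℝ, ∀ x : ℝ, |Vm x| ≤ C)
    (hVint : Integrable (fun x : ℝ => Vp x + Vm x))
    (φ : ℝ → ℝ) (K : NNReal) (hφ : LipschitzWith K φ)
    (hφsupp : HasCompactSupport φ) :
    ((∫ x : ℝ × ℝ,
        ((deriv φ x.1) ^ 2 * (φ₀ x.2) ^ 2 + (φ x.1) ^ 2 * (deriv φ₀ x.2) ^ 2))
      + (∫ x₁ : ℝ, (Vp x₁ - α) * (φ x₁ * φ₀ a) ^ 2)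
      + (∫ x₁ : ℝ, (Vm x₁ - α) * (φ x₁ * φ₀ (-a)) ^ 2))
      - ξ₀ * (∫ x : ℝ × ℝ, (φ x.1 * φ₀ x.2) ^ 2)
    = (∫ x : ℝ, (φ₀ x) ^ 2) * (∫ x : ℝ, (deriv φ x) ^ 2)
      + (φ₀ a) ^ 2 * (∫ x₁ : ℝ, (Vp x₁ + Vm x₁) * (φ x₁) ^ 2) := by
  have hκpos : 0 < κ₀ := lt_trans (by linarith) hκ₀.1
  set c : ℝ := Real.cosh (κ₀ * a) with hc
  set g : ℝ → ℝ := gfun κ₀ a with hgdef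
  have h2κ : 0 < 2 * κ₀ := by linarith
  -- values at ±a
  have hφ₀a : φ₀ a = c := phi0_mid hφ₀ (by rw [abs_of_pos ha])
  have hφ₀na : φ₀ (-a) = c := by
    rw [phi0_mid hφ₀ (by rw [abs_neg, abs_of_pos ha]), mul_neg, Real.cosh_neg]
  -- a.e. facts
  have hne_a : ∀ᵐ x : ℝ, x ≠ a := by
    filter_upwards [compl_mem_ae_iff.2 (measure_singleton a)] with x hx
    simpa using hx
  have hne_na : ∀ᵐ x : ℝ, x ≠ -a := by
    filter_upwards [compl_mem_ae_iff.2 (measure_singleton (-a))] with x hx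
    simpa using hx
  have hae : (fun x => (deriv φ₀ x) ^ 2) =ᵐ[volume] fun x => (g x) ^ 2 := by
    filter_upwards [hne_a, hne_na] with x h1 h2
    rw [(phi0_deriv ha hφ₀ h1 h2).deriv]
  -- branch values of g
  have hg_left : ∀ x : ℝ, x < -a → g x = κ₀ * (c * Real.exp (κ₀*(x+a))) := fun x hx => by
    simp only [hgdef, gfun, if_pos hx, hc]
  have hg_mid : ∀ x : ℝ, -a ≤ x → x ≤ a → g x = κ₀ * Real.sinh (κ₀ * x) := fun x hx1 hx2 => by
    simp only [hgdef, gfun, if_neg (not_lt.2 hx1), if_pos hx2]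
  have hg_right : ∀ x : ℝ, a < x → g x = -(κ₀ * (c * Real.exp (-κ₀*(x-a)))) := fun x hx => by
    simp only [hgdef, gfun, if_neg (not_lt.2 (show -a ≤ x by linarith)), if_neg (not_le.2 hx), hc]
  have hexp_sq : ∀ u : ℝ, Real.exp u ^ 2 = Real.exp (2*u) := fun u => by
    rw [sq, ← Real.exp_add]; ring_nf
  -- Integrability of φ₀² on pieces
  have hp2_left : IntegrableOn (fun x => (φ₀ x) ^ 2) (Iic (-a)) := by
    refine ((my_intOn_exp_Iic (2*κ₀) (c^2) (-a) h2κ).congr_fun (fun x hx => ?_) measurableSet_Iic)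
    rw [phi0_left ha hφ₀ (mem_Iic.1 hx), mul_pow, hexp_sq]
    rw [hc]; congr 2; ring
  have hp2_mid : IntegrableOn (fun x => (φ₀ x) ^ 2) (Ioc (-a) a) := by
    have hcont : Continuous fun x : ℝ => (Real.cosh (κ₀ * x)) ^ 2 := by fun_prop
    refine ((hcont.integrableOn_Icc (a := -a) (b := a)).mono_set Ioc_subset_Icc_self).congr_fun
      (fun x hx => ?_) measurableSet_Ioc
    rw [phi0_mid hφ₀ (abs_le.2 ⟨le_of_lt hx.1, hx.2⟩)]
  have hp2_right : IntegrableOn (fun x => (φ₀ x) ^ 2) (Ioi a) := by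
    refine ((my_intOn_exp_Ioi (2*κ₀) (c^2) a h2κ).congr_fun (fun x hx => ?_) measurableSet_Ioi)
    rw [phi0_right ha hφ₀ (le_of_lt (mem_Ioi.1 hx)), mul_pow, hexp_sq]
    rw [hc]; congr 2; ring
  have hp2int : Integrable (fun x => (φ₀ x) ^ 2) :=
    (my_split3 ha hp2_left hp2_mid hp2_right).1
  -- Integrability of g² on pieces
  have hg2_left : IntegrableOn (fun x => (g x) ^ 2) (Iic (-a)) := by
    refine Integrable.congr (my_intOn_exp_Iic (2*κ₀) (κ₀^2*c^2) (-a) h2κ) ?_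
    filter_upwards [ae_restrict_mem measurableSet_Iic, ae_restrict_of_ae hne_na] with x hx hne
    have hlt : x < -a := lt_of_le_of_ne (mem_Iic.1 hx) hne
    rw [hg_left x hlt, mul_pow, mul_pow, hexp_sq]
    ring_nf
  have hg2_mid : IntegrableOn (fun x => (g x) ^ 2) (Ioc (-a) a) := by
    have hcont : Continuous fun x : ℝ => (κ₀ * Real.sinh (κ₀ * x)) ^ 2 := by fun_prop
    refine ((hcont.integrableOn_Icc (a := -a) (b := a)).mono_set Ioc_subset_Icc_self).congr_fun
      (fun x hx => ?_) measurableSet_Ioc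
    rw [hg_mid x (le_of_lt hx.1) hx.2]
  have hg2_right : IntegrableOn (fun x => (g x) ^ 2) (Ioi a) := by
    refine ((my_intOn_exp_Ioi (2*κ₀) (κ₀^2*c^2) a h2κ).congr_fun (fun x hx => ?_) measurableSet_Ioi)
    rw [hg_right x (mem_Ioi.1 hx), neg_pow, mul_pow, mul_pow, hexp_sq]
    ring_nf
  have hg2int : Integrable (fun x => (g x) ^ 2) :=
    (my_split3 ha hg2_left hg2_mid hg2_right).1
  have hd2int : Integrable (fun x => (deriv φ₀ x) ^ 2) := hg2int.congr hae.symm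
  -- the combined function H = g² + κ₀²φ₀²
  set H : ℝ → ℝ := fun x => (g x) ^ 2 + κ₀^2 * (φ₀ x) ^ 2 with hH
  have hH_left : IntegrableOn H (Iic (-a)) := hg2_left.add (hp2_left.const_mul _)
  have hH_mid : IntegrableOn H (Ioc (-a) a) := hg2_mid.add (hp2_mid.const_mul _)
  have hH_right : IntegrableOn H (Ioi a) := hg2_right.add (hp2_right.const_mul _)
  obtain ⟨hHint, hHsplit⟩ := my_split3 ha hH_left hH_mid hH_right
  -- compute the three pieces of ∫ H
  have hval_left : ∫ x in Iic (-a), H x = κ₀ * c^2 := by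
    have : ∫ x in Iic (-a), H x
        = ∫ x in Iic (-a), (2*κ₀^2*c^2) * Real.exp ((2*κ₀)*(x - (-a))) := by
      apply integral_congr_ae
      filter_upwards [ae_restrict_mem measurableSet_Iic, ae_restrict_of_ae hne_na] with x hx hne
      have hlt : x < -a := lt_of_le_of_ne (mem_Iic.1 hx) hne
      rw [hH]
      simp only
      rw [hg_left x hlt, phi0_left ha hφ₀ (le_of_lt hlt),
        show (κ₀ * (c * Real.exp (κ₀*(x+a))))^2 + κ₀^2*(c * Real.exp (κ₀*(x+a)))^2
          = 2*κ₀^2*c^2 * (Real.exp (κ₀*(x+a)))^2 from by ring, hexp_sq]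
      congr 2; ring
    rw [this, my_integral_exp_Iic (2*κ₀) (2*κ₀^2*c^2) (-a) h2κ]
    field_simp
  have hval_right : ∫ x in Ioi a, H x = κ₀ * c^2 := by
    have : ∫ x in Ioi a, H x
        = ∫ x in Ioi a, (2*κ₀^2*c^2) * Real.exp (-(2*κ₀)*(x - a)) := by
      apply setIntegral_congr_fun measurableSet_Ioi
      intro x hx
      rw [hH]
      simp only
      rw [hg_right x (mem_Ioi.1 hx), phi0_right ha hφ₀ (le_of_lt (mem_Ioi.1 hx)),
        show (-(κ₀ * (c * Real.exp (-κ₀*(x-a)))))^2 + κ₀^2*(c * Real.exp (-κ₀*(x-a)))^2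
          = 2*κ₀^2*c^2 * (Real.exp (-κ₀*(x-a)))^2 from by ring, hexp_sq]
      congr 2; ring
    rw [this, my_integral_exp_Ioi (2*κ₀) (2*κ₀^2*c^2) a h2κ]
    field_simp
  have hval_mid : ∫ x in Ioc (-a) a, H x = κ₀ * Real.sinh (2*(κ₀*a)) := by
    have h1 : ∫ x in Ioc (-a) a, H x = ∫ x in Ioc (-a) a, κ₀^2 * Real.cosh (2*(κ₀*x)) := by
      apply setIntegral_congr_fun measurableSet_Ioc
      intro x hx
      rw [hH]
      simp only
      rw [hg_mid x (le_of_lt hx.1) hx.2, phi0_mid hφ₀ (abs_le.2 ⟨le_of_lt hx.1, hx.2⟩),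
        Real.cosh_two_mul (κ₀*x)]
      ring
    rw [h1, ← intervalIntegral.integral_of_le (by linarith : (-a:ℝ) ≤ a)]
    have hF : ∀ u ∈ Set.uIcc (-a) a, HasDerivAt (fun u => (κ₀/2) * Real.sinh (2*(κ₀*u)))
        (κ₀^2 * Real.cosh (2*(κ₀*u))) u := by
      intro u _
      have hin : HasDerivAt (fun u : ℝ => 2*(κ₀*u)) (2*κ₀) u := by
        simpa using ((hasDerivAt_id u).const_mul κ₀).const_mul 2
      have := hin.sinh.const_mul (κ₀/2)
      exact this.congr_deriv (by ring)
    have hci : IntervalIntegrable (fun u => κ₀^2 * Real.cosh (2*(κ₀*u))) volume (-a) a := by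
      exact (by fun_prop : Continuous fun u : ℝ => κ₀^2 * Real.cosh (2*(κ₀*u))).intervalIntegrable _ _
    rw [intervalIntegral.integral_eq_sub_of_hasDerivAt hF hci,
      show 2*(κ₀*(-a)) = -(2*(κ₀*a)) from by ring, Real.sinh_neg]
    ring
  -- the key spectral identity
  have hval : ∫ x, H x = 2*α*c^2 := by
    rw [hHsplit, hval_left, hval_mid, hval_right]
    set E : ℝ := Real.exp (κ₀*a) with hE
    set F : ℝ := Real.exp (-(κ₀*a)) with hF
    have hcEF : c = (E + F)/2 := by rw [hc, Real.cosh_eq]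
    have hsinh2 : Real.sinh (2*(κ₀*a)) = (E^2 - F^2)/2 := by
      rw [Real.sinh_eq, show (2*(κ₀*a)) = (κ₀*a)+(κ₀*a) from by ring,
        show -((κ₀*a)+(κ₀*a)) = (-(κ₀*a)) + (-(κ₀*a)) from by ring,
        Real.exp_add, Real.exp_add, ← hE, ← hF]
      ring
    have hEF : E * F = 1 := by rw [hE, hF, ← Real.exp_add]; simp
    have hhyp : (α/2) * (F*F) = κ₀ - α/2 := by
      have h := hκ₀.2
      rwa [show (-2*κ₀*a) = (-(κ₀*a)) + (-(κ₀*a)) from by ring, Real.exp_add, ← hF] at h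
    have hk2 : 2*κ₀*E = α*E + α*F := by
      linear_combination (-2*E) * hhyp + (α*F) * hEF
    rw [hcEF, hsinh2]
    linear_combination ((E+F)/2) * hk2
  have hsum : (∫ x, (g x)^2) + κ₀^2 * ∫ x, (φ₀ x)^2 = 2*α*c^2 := by
    rw [← integral_const_mul, ← integral_add hg2int (hp2int.const_mul _)]
    exact hval
  have hrel : (∫ x, (deriv φ₀ x)^2) + κ₀^2 * ∫ x, (φ₀ x)^2 = 2*α*c^2 := by
    rw [integral_congr_ae hae]; exact hsum
  -- φ side integrability
  have hφc : Continuous φ := hφ.continuous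
  have hφ2int : Integrable (fun x => (φ x)^2) := by
    have hs : HasCompactSupport (fun x => (φ x)^2) :=
      hφsupp.comp_left (g := fun y => y^2) (by simp)
    exact (hφc.pow 2).integrable_of_hasCompactSupport hs
  have hdφ2int : Integrable (fun x => (deriv φ x)^2) := by
    have ms : MeasurableSet (tsupport (deriv φ)) := (isClosed_tsupport _).measurableSet
    have hind : Integrable ((tsupport (deriv φ)).indicator (fun _ => ((K:ℝ))^2)) := by
      rw [integrable_indicator_iff ms]
      exact integrableOn_const (IsCompact.measure_lt_top hφsupp.deriv).ne
    refine hind.mono' (((measurable_deriv φ).pow_const 2).aestronglyMeasurable)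
      (ae_of_all _ fun x => ?_)
    by_cases hx : x ∈ tsupport (deriv φ)
    · rw [indicator_of_mem hx]
      have h1 : ‖deriv φ x‖ ≤ K := norm_deriv_le_of_lipschitz hφ
      calc ‖(deriv φ x)^2‖ = ‖deriv φ x‖^2 := by rw [norm_pow]
        _ ≤ (K:ℝ)^2 := pow_le_pow_left₀ (norm_nonneg _) h1 2
    · rw [indicator_of_notMem hx, image_eq_zero_of_notMem_tsupport hx]
      simp
  -- potential integrability
  obtain ⟨Cp, hCp⟩ := hVpb
  obtain ⟨Cm, hCm⟩ := hVmb
  have hVpφ : Integrable (fun x => Vp x * (φ x)^2) :=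
    hφ2int.bdd_mul hVpm.aestronglyMeasurable
      (ae_of_all _ fun x => by simpa [Real.norm_eq_abs] using hCp x)
  have hVmφ : Integrable (fun x => Vm x * (φ x)^2) :=
    hφ2int.bdd_mul hVmm.aestronglyMeasurable
      (ae_of_all _ fun x => by simpa [Real.norm_eq_abs] using hCm x)
  -- product integrals
  have hprod1 : (∫ x : ℝ × ℝ,
        ((deriv φ x.1) ^ 2 * (φ₀ x.2) ^ 2 + (φ x.1) ^ 2 * (deriv φ₀ x.2) ^ 2))
      = (∫ x : ℝ, (deriv φ x)^2) * (∫ x : ℝ, (φ₀ x)^2)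
        + (∫ x : ℝ, (φ x)^2) * (∫ x : ℝ, (deriv φ₀ x)^2) := by
    have e1 := MeasureTheory.integral_prod_mul (μ := volume) (ν := volume)
      (f := fun x => (deriv φ x)^2) (g := fun y => (φ₀ y)^2)
    have e2 := MeasureTheory.integral_prod_mul (μ := volume) (ν := volume)
      (f := fun x => (φ x)^2) (g := fun y => (deriv φ₀ y)^2)
    beta_reduce at e1 e2
    rw [Measure.volume_eq_prod, integral_add (hdφ2int.mul_prod hp2int) (hφ2int.mul_prod hd2int),
      e1, e2]
  have hprod2 : (∫ x : ℝ × ℝ, (φ x.1 * φ₀ x.2) ^ 2)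
      = (∫ x : ℝ, (φ x)^2) * (∫ x : ℝ, (φ₀ x)^2) := by
    have e1 := MeasureTheory.integral_prod_mul (μ := volume) (ν := volume)
      (f := fun x => (φ x)^2) (g := fun y => (φ₀ y)^2)
    beta_reduce at e1
    simp only [mul_pow]
    rw [Measure.volume_eq_prod, e1]
  have hpot1 : (∫ x₁ : ℝ, (Vp x₁ - α) * (φ x₁ * c) ^ 2)
      = c^2 * (∫ x : ℝ, Vp x * (φ x)^2) - (α * c^2) * ∫ x : ℝ, (φ x)^2 := by
    rw [show (fun x₁ => (Vp x₁ - α) * (φ x₁ * c)^2)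
        = fun x₁ => c^2 * (Vp x₁ * (φ x₁)^2) - (α*c^2) * (φ x₁)^2 from funext fun x => by ring,
      integral_sub (hVpφ.const_mul _) (hφ2int.const_mul _), integral_const_mul, integral_const_mul]
  have hpot2 : (∫ x₁ : ℝ, (Vm x₁ - α) * (φ x₁ * c) ^ 2)
      = c^2 * (∫ x : ℝ, Vm x * (φ x)^2) - (α * c^2) * ∫ x : ℝ, (φ x)^2 := by
    rw [show (fun x₁ => (Vm x₁ - α) * (φ x₁ * c)^2)
        = fun x₁ => c^2 * (Vm x₁ * (φ x₁)^2) - (α*c^2) * (φ x₁)^2 from funext fun x => by ring,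
      integral_sub (hVmφ.const_mul _) (hφ2int.const_mul _), integral_const_mul, integral_const_mul]
  have hVsum : (∫ x₁ : ℝ, (Vp x₁ + Vm x₁) * (φ x₁) ^ 2)
      = (∫ x : ℝ, Vp x * (φ x)^2) + ∫ x : ℝ, Vm x * (φ x)^2 := by
    rw [show (fun x₁ => (Vp x₁ + Vm x₁) * (φ x₁)^2)
        = fun x₁ => Vp x₁ * (φ x₁)^2 + Vm x₁ * (φ x₁)^2 from funext fun x => by ring,
      integral_add hVpφ hVmφ]
  rw [hφ₀a, hφ₀na, hprod1, hprod2, hpot1, hpot2, hVsum, hξ₀]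
  linear_combination (∫ x : ℝ, (φ x)^2) * hrel
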